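/- arXiv:1806.01537 — 8 statements merged into one kernel-verified Lean document; each statement's English description precedes it below -/
import Mathlib

section
/- Let n, k, p, q ∈ ℕ with k ≤ n and p ≤ n·q. Then the number of partitions with k parts fitting in a k×(n−k) box, of size p and trace q, equals the number of partitions with k parts fitting in a k×(n−k) box, of size n·q − p and trace q; that is, part(p, k, n−k, q) = part(n·q − p, k, n−k, q). (This is the combinatorial content of the palindrome duality rank^{p,q} H(Gr_k(ℝ^{n,1})) = rank^{nq−p,q} H(Gr_k(ℝ^{n,1})).) -/
open Finset

lemma cardFilterLe (k a : ℕ) : a ≤ k → (univ.filter fun i : Fin k => a ≤ (i:ℕ)).card = k - a := by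
  intro ha
  rcases Nat.lt_or_ge a k with h | h
  · have : (univ.filter fun i : Fin k => a ≤ (i:ℕ)) = Finset.Ici ⟨a, h⟩ := by
      ext i; simp [Fin.le_def]
    rw [this, Fin.card_Ici]
  · have : (univ.filter fun i : Fin k => a ≤ (i:ℕ)) = ∅ := by
      ext i; simp; omega
    rw [this]; simp; omega

/-- reversal permutation within the two blocks `[0, k-q)` and `[k-q, k)` -/
def revIdx (k q : ℕ) (i : Fin k) : Fin k :=
  if h : (i : ℕ) < k - q then ⟨k - q - 1 - i, by omega⟩
  else ⟨2 * k - q - 1 - i, by have := i.isLt; omega⟩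

lemma revIdx_lt {k q : ℕ} {i : Fin k} (h : (i:ℕ) < k - q) : ((revIdx k q i : Fin k) : ℕ) = k - q - 1 - i ∧ ((revIdx k q i : Fin k) : ℕ) < k - q := by
  simp [revIdx, h]; omega

lemma revIdx_ge {k q : ℕ} {i : Fin k} (h : ¬ (i:ℕ) < k - q) : ((revIdx k q i : Fin k) : ℕ) = 2 * k - q - 1 - i ∧ ¬ ((revIdx k q i : Fin k) : ℕ) < k - q := by
  have := i.isLt; simp [revIdx, h]; omega

lemma revIdx_invol {k q : ℕ} (hq : q ≤ k) (i : Fin k) : revIdx k q (revIdx k q i) = i := by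
  have hi := i.isLt
  by_cases h : (i:ℕ) < k - q
  · obtain ⟨h1, h2⟩ := revIdx_lt h
    obtain ⟨h3, _⟩ := revIdx_lt h2
    apply Fin.ext; rw [h3, h1]; omega
  · obtain ⟨h1, h2⟩ := revIdx_ge h
    obtain ⟨h3, _⟩ := revIdx_ge h2
    apply Fin.ext; rw [h3, h1]; omega

lemma revIdx_bij {k q : ℕ} (hq : q ≤ k) : Function.Bijective (revIdx k q) :=
  Function.Involutive.bijective (revIdx_invol hq)

/-- the complementation map -/
def Fm (k m q : ℕ) (l : Fin k → ℕ) : Fin k → ℕ :=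
  fun i => (if (i:ℕ) < k - q then q else m + q) - l (revIdx k q i)

lemma trace_char {k q : ℕ} {l : Fin k → ℕ} (hl : Monotone l)
    (ht : (univ.filter fun i : Fin k => k ≤ l i + (i:ℕ)).card = q) :
    q ≤ k ∧ ∀ i : Fin k, (k ≤ l i + (i:ℕ) ↔ k - q ≤ (i:ℕ)) := by
  have hqk : q ≤ k := by
    rw [← ht]; simpa using (Finset.card_filter_le univ fun i : Fin k => k ≤ l i + (i:ℕ))
  refine ⟨hqk, ?_⟩
  set S := univ.filter fun i : Fin k => k ≤ l i + (i:ℕ) with hS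
  set T := univ.filter fun i : Fin k => k - q ≤ (i:ℕ) with hT
  have hTcard : T.card = q := by rw [hT, cardFilterLe k (k-q) (by omega)]; omega
  have hup : ∀ i ∈ S, ∀ j : Fin k, i ≤ j → j ∈ S := by
    intro i hi j hij
    simp only [hS, mem_filter, mem_univ, true_and] at hi ⊢
    have h1 := hl hij
    have h2 := Fin.le_def.mp hij
    omega
  have hST : S = T := by
    by_cases hsub : S ⊆ T
    · exact Finset.eq_of_subset_of_card_le hsub (by rw [hTcard, ht])
    · obtain ⟨i, hiS, hiT⟩ := Finset.not_subset.mp hsub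
      have hiv : (i:ℕ) < k - q := by
        simp only [hT, mem_filter, mem_univ, true_and] at hiT; omega
      have hTS : T ⊆ S := by
        intro j hj
        apply hup i hiS
        simp only [hT, mem_filter, mem_univ, true_and] at hj
        rw [Fin.le_def]; omega
      exact (Finset.eq_of_subset_of_card_le hTS (by rw [hTcard, ht])).symm
  intro i
  constructor <;> intro h
  · have hi : i ∈ T := hST ▸ (by simp only [hS, mem_filter, mem_univ, true_and]; exact h)
    simpa only [hT, mem_filter, mem_univ, true_and] using hi
  · have hi : i ∈ S := hST.symm ▸ (by simp only [hT, mem_filter, mem_univ, true_and]; exact h)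
    simpa only [hS, mem_filter, mem_univ, true_and] using hi

lemma main_step {k m q : ℕ} {l : Fin k → ℕ} (hl : Monotone l) (hb : ∀ i, l i ≤ m)
    (ht : (univ.filter fun i : Fin k => k ≤ l i + (i:ℕ)).card = q) :
    Monotone (Fm k m q l) ∧ (∀ i, Fm k m q l i ≤ m) ∧
    ((∑ i, Fm k m q l i) + (∑ i, l i) = q * (k + m)) ∧
    ((univ.filter fun i : Fin k => k ≤ Fm k m q l i + (i:ℕ)).card = q) ∧
    Fm k m q (Fm k m q l) = l := by
  obtain ⟨hqk, hchar⟩ := trace_char hl ht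
  -- pointwise bounds
  have hlow : ∀ i : Fin k, (i:ℕ) < k - q → l i ≤ q := by
    intro i hi
    have hj : k - q - 1 < k := by omega
    have h1 := hl (show i ≤ (⟨k-q-1, hj⟩ : Fin k) by rw [Fin.le_def]; simp; omega)
    have h2 := (hchar ⟨k-q-1, hj⟩)
    simp only [Fin.val_mk] at h2
    omega
  have hup : ∀ i : Fin k, k - q ≤ (i:ℕ) → q ≤ l i := by
    intro i hi
    rcases Nat.eq_zero_or_pos q with h0 | h0
    · omega
    · have hj : k - q < k := by have := i.isLt; omega
      have h1 := (hchar ⟨k-q, hj⟩).mpr (by simp)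
      have h2 := hl (show (⟨k-q, hj⟩ : Fin k) ≤ i by rw [Fin.le_def]; simp only [Fin.val_mk]; omega)
      simp only [Fin.val_mk] at h1
      omega
  have hqm : 0 < q → q ≤ m := by
    intro h0
    rcases Nat.eq_zero_or_pos k with hk0 | hk0
    · -- k = 0 : trace is card of empty filter = 0 = q, contradiction
      omega
    · have hj : k - 1 < k := by omega
      have h1 := hup ⟨k-1, hj⟩ (by simp; omega)
      have h2 := hb ⟨k-1, hj⟩
      omega
  have hsub : ∀ i : Fin k, l (revIdx k q i) ≤ (if (i:ℕ) < k - q then q else m + q) := by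
    intro i
    split_ifs with h
    · exact hlow _ (revIdx_lt h).2
    · exact (hb _).trans (by omega)
  have hval : ∀ i : Fin k, Fm k m q l i = (if (i:ℕ) < k - q then q else m + q) - l (revIdx k q i) :=
    fun _ => rfl
  refine ⟨?_, ?_, ?_, ?_, ?_⟩
  · -- monotone
    intro i j hij
    have hij' := Fin.le_def.mp hij
    rw [hval i, hval j]
    by_cases hi : (i:ℕ) < k - q <;> by_cases hj : (j:ℕ) < k - q
    · obtain ⟨e1, f1⟩ := revIdx_lt hi
      obtain ⟨e2, f2⟩ := revIdx_lt hj
      have := hl (show revIdx k q j ≤ revIdx k q i by rw [Fin.le_def]; omega)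
      simp only [if_pos hi, if_pos hj]
      omega
    · have h1 := hlow _ (revIdx_lt hi).2
      have h2 := hb (revIdx k q j)
      have h3 := hup (revIdx k q j) (by have := (revIdx_ge hj).2; omega)
      simp only [if_pos hi, if_neg hj]
      omega
    · omega
    · obtain ⟨e1, f1⟩ := revIdx_ge hi
      obtain ⟨e2, f2⟩ := revIdx_ge hj
      have := hl (show revIdx k q j ≤ revIdx k q i by rw [Fin.le_def]; omega)
      simp only [if_neg hi, if_neg hj]
      omega
  · -- bound
    intro i
    rw [hval i]
    split_ifs with h
    · have h1 := hqm
      have h2 := hlow _ (revIdx_lt h).2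
      omega
    · have h3 := hup (revIdx k q i) (by have := (revIdx_ge h).2; omega)
      omega
  · -- sum
    have hcomp : ∑ i, l (revIdx k q i) = ∑ i, l i := Function.Bijective.sum_comp (revIdx_bij hqk) l
    have : (∑ i, Fm k m q l i) + (∑ i, l i)
        = ∑ i : Fin k, (if (i:ℕ) < k - q then q else m + q) := by
      rw [← hcomp, ← Finset.sum_add_distrib]
      refine Finset.sum_congr rfl fun i _ => ?_
      rw [hval i]
      have := hsub i
      omega
    rw [this, Finset.sum_ite, Finset.sum_const, Finset.sum_const]
    have c1 : (univ.filter fun i : Fin k => ¬ (i:ℕ) < k - q).card = q := by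
      have : (univ.filter fun i : Fin k => ¬ (i:ℕ) < k - q)
          = univ.filter fun i : Fin k => k - q ≤ (i:ℕ) := by
        apply Finset.filter_congr; intro i _; omega
      rw [this, cardFilterLe k (k-q) (by omega)]; omega
    have c2 : (univ.filter fun i : Fin k => (i:ℕ) < k - q).card = k - q := by
      have h3 := Finset.card_filter_add_card_filter_not
        (s := (univ : Finset (Fin k))) (p := fun i : Fin k => (i:ℕ) < k - q)
      simp only [Finset.card_univ, Fintype.card_fin] at h3
      omega
    rw [c1, c2]
    obtain ⟨a, rfl⟩ := Nat.exists_eq_add_of_le hqk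
    simp [Nat.add_sub_cancel_left, smul_eq_mul]
    ring
  · -- trace
    have : (univ.filter fun i : Fin k => k ≤ Fm k m q l i + (i:ℕ))
        = univ.filter fun i : Fin k => k - q ≤ (i:ℕ) := by
      apply Finset.filter_congr; intro i _
      rw [hval i]
      by_cases h : (i:ℕ) < k - q
      · obtain ⟨e, f⟩ := revIdx_lt h
        have := hlow _ f
        simp only [if_pos h]
        omega
      · obtain ⟨e, f⟩ := revIdx_ge h
        have := hb (revIdx k q i)
        simp only [if_neg h]
        have := i.isLt
        omega
    rw [this, cardFilterLe k (k-q) (by omega)]; omega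
  · -- involution
    funext i
    have hri := revIdx_invol hqk i
    show (if (i:ℕ) < k - q then q else m + q) - Fm k m q l (revIdx k q i) = l i
    rw [hval (revIdx k q i), hri]
    by_cases h : (i:ℕ) < k - q
    · obtain ⟨e, f⟩ := revIdx_lt h
      have := hlow i h
      simp only [if_pos h, if_pos f]
      omega
    · obtain ⟨e, f⟩ := revIdx_ge h
      have := hb i
      simp only [if_neg h, if_neg f]
      omega

/-- `partCount p k m t` is the number of partitions with `k` parts (a monotone
function `Fin k → ℕ`) fitting in a `k × m` box, of size `p` and trace `t`. -/
noncomputable def partCount (p k m t : ℕ) : ℕ :=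
  Nat.card {l : Fin k → ℕ // Monotone l ∧ (∀ i, l i ≤ m) ∧ (∑ i, l i) = p ∧
    (Finset.univ.filter (fun i : Fin k => k ≤ l i + (i : ℕ))).card = t}

/-- Palindrome duality: `part(p, k, n−k, q) = part(n·q − p, k, n−k, q)`. -/
theorem partCount_palindrome (n k p q : ℕ) (hk : k ≤ n) (hp : p ≤ n * q) :
    partCount p k (n - k) q = partCount (n * q - p) k (n - k) q := by
  have hn : k + (n - k) = n := by omega
  unfold partCount
  apply Nat.card_congr
  refine
    { toFun := fun x => ⟨Fm k (n-k) q x.1, ?_⟩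
      invFun := fun x => ⟨Fm k (n-k) q x.1, ?_⟩
      left_inv := fun x => ?_
      right_inv := fun x => ?_ }
  · obtain ⟨hl, hb, hs, ht⟩ := x.2
    obtain ⟨h1, h2, h3, h4, _⟩ := main_step hl hb ht
    refine ⟨h1, h2, ?_, h4⟩
    rw [hs, hn, Nat.mul_comm q n] at h3
    exact Nat.eq_sub_of_add_eq h3
  · obtain ⟨hl, hb, hs, ht⟩ := x.2
    obtain ⟨h1, h2, h3, h4, _⟩ := main_step hl hb ht
    refine ⟨h1, h2, ?_, h4⟩
    rw [hs, hn, Nat.mul_comm q n] at h3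
    have h5 := Nat.eq_sub_of_add_eq h3
    rw [h5, Nat.sub_sub_self hp]
  · obtain ⟨hl, hb, hs, ht⟩ := x.2
    obtain ⟨_, _, _, _, h5⟩ := main_step hl hb ht
    exact Subtype.ext h5
  · obtain ⟨hl, hb, hs, ht⟩ := x.2
    obtain ⟨_, _, _, _, h5⟩ := main_step hl hb ht
    exact Subtype.ext h5
end

section
/- Let k, m, q, p ∈ ℕ with q ≤ k and q ≤ m. Then the number of partitions with k parts fitting in a k×m box, of size p and trace q, equals the sum over all pairs (a,b) ∈ ℕ×ℕ with q² + a + b = p of the product: (number of partitions with k−q parts fitting in a (k−q)×q box, of size a) × (number of partitions with q parts fitting in a q×(m−q) box, of size b). (Corner decomposition: a trace-q diagram is a q×q Durfee square together with a region to the north fitting in (k−q)×q and a region to the east fitting in q×(m−q).) -/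
open Finset

/-- Number of partitions with `k` parts fitting in a `k × m` box, of size `p`
and trace `t`. -/
noncomputable def partCountTrace (p k m t : ℕ) : ℕ :=
  Nat.card {l : Fin k → ℕ // Monotone l ∧ (∀ i, l i ≤ m) ∧ (∑ i, l i) = p ∧
    (Finset.univ.filter (fun i : Fin k => k ≤ l i + (i : ℕ))).card = t}

/-- Number of partitions with `k` parts fitting in a `k × m` box, of size `p`. -/
noncomputable def partCountSize (p k m : ℕ) : ℕ :=
  Nat.card {l : Fin k → ℕ // Monotone l ∧ (∀ i, l i ≤ m) ∧ (∑ i, l i) = p}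

section Aux

lemma trace_iff (c q : ℕ) (l : Fin (c + q) → ℕ) (hl : Monotone l) :
    (Finset.univ.filter (fun i : Fin (c + q) => c + q ≤ l i + (i : ℕ))).card = q ↔
      ((∀ i : Fin (c + q), (i : ℕ) < c → l i ≤ q) ∧
       (∀ i : Fin (c + q), c ≤ (i : ℕ) → q ≤ l i)) := by
  have hIci : ∀ i0 : Fin (c + q),
      (Finset.univ.filter (fun j : Fin (c + q) => i0 ≤ j)) = Finset.Ici i0 := by
    intro i0; ext j; simp [Finset.mem_Ici]
  constructor
  · intro hcard
    have key : ∀ i : Fin (c + q), (c + q ≤ l i + (i : ℕ)) ↔ c ≤ (i : ℕ) := by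
      have hsub : ∀ i : Fin (c + q), c + q ≤ l i + (i : ℕ) → c ≤ (i : ℕ) := by
        intro i hi
        by_contra hic
        push_neg at hic
        have hmono : (Finset.univ.filter (fun j : Fin (c + q) => i ≤ j)) ⊆
            (Finset.univ.filter (fun j : Fin (c + q) => c + q ≤ l j + (j : ℕ))) := by
          intro j hj
          simp only [Finset.mem_filter, Finset.mem_univ, true_and] at hj ⊢
          have := hl hj
          omega
        have hc1 := Finset.card_le_card hmono
        rw [hIci, Fin.card_Ici, hcard] at hc1
        omega
      have hq : (Finset.univ.filter (fun j : Fin (c + q) => c ≤ (j : ℕ))).card = q := by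
        rcases Nat.eq_zero_or_pos q with hq0 | hq0
        · subst hq0
          rw [Finset.card_eq_zero, Finset.filter_eq_empty_iff]
          intro j _
          have := j.isLt; omega
        · have : (Finset.univ.filter (fun j : Fin (c + q) => c ≤ (j : ℕ))) =
              Finset.Ici (⟨c, by omega⟩ : Fin (c + q)) := by
            ext j; simp [Finset.mem_Ici, Fin.le_def]
          rw [this, Fin.card_Ici]; simp
      have heq : (Finset.univ.filter (fun j : Fin (c + q) => c + q ≤ l j + (j : ℕ))) =
          (Finset.univ.filter (fun j : Fin (c + q) => c ≤ (j : ℕ))) := by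
        apply Finset.eq_of_subset_of_card_le
        · intro j hj
          simp only [Finset.mem_filter, Finset.mem_univ, true_and] at hj ⊢
          exact hsub j hj
        · rw [hq, hcard]
      intro i
      constructor
      · exact hsub i
      · intro hi
        have : i ∈ (Finset.univ.filter (fun j : Fin (c + q) => c ≤ (j : ℕ))) := by
          simp [hi]
        rw [← heq] at this
        simpa using this
    constructor
    · intro i hic
      have hc0 : 0 < c := by omega
      have hmem : ¬ (c + q ≤ l ⟨c - 1, by omega⟩ + ((⟨c - 1, by omega⟩ : Fin (c+q)) : ℕ)) := by
        rw [key]; simp; omega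
      have h1 : l i ≤ l ⟨c - 1, by omega⟩ := hl (by simp [Fin.le_def]; omega)
      simp at hmem
      omega
    · intro i hic
      have hq0 : 0 < q := by have := i.isLt; omega
      have hmem : c + q ≤ l ⟨c, by omega⟩ + ((⟨c, by omega⟩ : Fin (c+q)) : ℕ) := by
        rw [key]
      have h1 : l ⟨c, by omega⟩ ≤ l i := hl (by simp [Fin.le_def]; omega)
      simp at hmem
      omega
  · rintro ⟨h1, h2⟩
    have heq : (Finset.univ.filter (fun j : Fin (c + q) => c + q ≤ l j + (j : ℕ))) =
        (Finset.univ.filter (fun j : Fin (c + q) => c ≤ (j : ℕ))) := by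
      ext j
      simp only [Finset.mem_filter, Finset.mem_univ, true_and]
      constructor
      · intro hj
        by_contra hc
        push_neg at hc
        have := h1 j hc
        omega
      · intro hj
        have := h2 j hj
        have := j.isLt
        omega
    rw [heq]
    rcases Nat.eq_zero_or_pos q with hq0 | hq0
    · subst hq0
      rw [Finset.card_eq_zero, Finset.filter_eq_empty_iff]
      intro j _
      have := j.isLt; omega
    · have : (Finset.univ.filter (fun j : Fin (c + q) => c ≤ (j : ℕ))) =
          Finset.Ici (⟨c, by omega⟩ : Fin (c + q)) := by
        ext j; simp [Finset.mem_Ici, Fin.le_def]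
      rw [this, Fin.card_Ici]; simp

def boxType (n m s : ℕ) : Type :=
  {f : Fin n → ℕ // Monotone f ∧ (∀ i, f i ≤ m) ∧ (∑ i, f i) = s}

instance boxType.finite (n m s : ℕ) : Finite (boxType n m s) := by
  apply Finite.of_injective (fun x : boxType n m s =>
    (fun i => (⟨x.1 i, Nat.lt_succ_of_le (x.2.2.1 i)⟩ : Fin (m+1))))
  intro x y h
  apply Subtype.ext
  funext i
  have := congrFun h i
  simpa [Fin.ext_iff] using this

def srcType (c q d p : ℕ) : Type :=
  {l : Fin (c+q) → ℕ // Monotone l ∧ (∀ i, l i ≤ q + d) ∧ (∑ i, l i) = p ∧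
    (Finset.univ.filter (fun i : Fin (c+q) => c + q ≤ l i + (i : ℕ))).card = q}

def tgtIdx (q p : ℕ) : Finset (ℕ × ℕ) :=
  (Finset.range (p + 1) ×ˢ Finset.range (p + 1)).filter (fun ab => q ^ 2 + ab.1 + ab.2 = p)

lemma mem_tgtIdx {q p : ℕ} {ab : ℕ × ℕ} :
    ab ∈ tgtIdx q p ↔ (q ^ 2 + ab.1 + ab.2 = p ∧ ab.1 < p + 1 ∧ ab.2 < p + 1) := by
  simp only [tgtIdx, Finset.mem_filter, Finset.mem_product, Finset.mem_range]
  tauto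

def tgtType (c q d p : ℕ) : Type :=
  Σ ab : {ab : ℕ × ℕ // ab ∈ tgtIdx q p}, boxType c q ab.1.1 × boxType q d ab.1.2

def glue (c q : ℕ) (f : Fin c → ℕ) (g : Fin q → ℕ) : Fin (c+q) → ℕ :=
  fun i => if h : (i : ℕ) < c then f ⟨i, h⟩
           else g ⟨(i : ℕ) - c, by have := i.isLt; omega⟩ + q

lemma glue_castAdd (c q : ℕ) (f : Fin c → ℕ) (g : Fin q → ℕ) (j : Fin c) :
    glue c q f g (Fin.castAdd q j) = f j := by
  have hj : ((Fin.castAdd q j : Fin (c+q)) : ℕ) = (j : ℕ) := rfl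
  simp only [glue, hj, dif_pos j.isLt, Fin.eta]

lemma glue_natAdd (c q : ℕ) (f : Fin c → ℕ) (g : Fin q → ℕ) (j : Fin q) :
    glue c q f g (Fin.natAdd c j) = g j + q := by
  have hj : ((Fin.natAdd c j : Fin (c+q)) : ℕ) = c + (j : ℕ) := rfl
  have h : ¬ (c + (j : ℕ) < c) := by omega
  simp only [glue, hj, dif_neg h]
  congr 2
  apply Fin.ext
  simp

lemma glue_mono (c q : ℕ) (f : Fin c → ℕ) (g : Fin q → ℕ)
    (hf : Monotone f) (hg : Monotone g) (hfq : ∀ i, f i ≤ q) :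
    Monotone (glue c q f g) := by
  intro i j hij
  have hij' : (i : ℕ) ≤ (j : ℕ) := hij
  unfold glue
  by_cases hi : (i : ℕ) < c
  · rw [dif_pos hi]
    by_cases hj : (j : ℕ) < c
    · rw [dif_pos hj]
      exact hf (show ((⟨(i : ℕ), hi⟩ : Fin c) ≤ ⟨(j : ℕ), hj⟩) from hij')
    · rw [dif_neg hj]
      have := hfq ⟨i, hi⟩
      omega
  · rw [dif_neg hi, dif_neg (by omega : ¬ (j : ℕ) < c)]
    have : g ⟨(i : ℕ) - c, by have := i.isLt; omega⟩ ≤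
        g ⟨(j : ℕ) - c, by have := j.isLt; omega⟩ := hg (by simp [Fin.le_def]; omega)
    omega

lemma glue_sum (c q : ℕ) (f : Fin c → ℕ) (g : Fin q → ℕ) :
    ∑ i, glue c q f g i = (∑ i, f i) + ((∑ i, g i) + q * q) := by
  rw [Fin.sum_univ_add (f := glue c q f g)]
  simp only [glue_castAdd, glue_natAdd]
  rw [Finset.sum_add_distrib]
  simp [mul_comm]

lemma unglue_sum (c q : ℕ) (l : Fin (c+q) → ℕ) (hq : ∀ j : Fin q, q ≤ l (Fin.natAdd c j)) :
    ∑ i, l i = (∑ j, l (Fin.castAdd q j)) + ((∑ j : Fin q, (l (Fin.natAdd c j) - q)) + q * q) := by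
  rw [Fin.sum_univ_add (f := l)]
  congr 1
  have : ∀ j : Fin q, l (Fin.natAdd c j) = (l (Fin.natAdd c j) - q) + q := by
    intro j; have := hq j; omega
  rw [Finset.sum_congr rfl (fun j _ => this j), Finset.sum_add_distrib]
  simp [mul_comm]

lemma tgt_ext {c q d p : ℕ} (x y : tgtType c q d p) (h1 : x.1.1 = y.1.1)
    (h2 : (x.2.1.1 : Fin c → ℕ) = y.2.1.1) (h3 : (x.2.2.1 : Fin q → ℕ) = y.2.2.1) : x = y := by
  obtain ⟨⟨ab, hab⟩, ⟨f, hf⟩, ⟨g, hg⟩⟩ := x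
  obtain ⟨⟨ab', hab'⟩, ⟨f', hf'⟩, ⟨g', hg'⟩⟩ := y
  simp only at h1 h2 h3
  subst h1; subst h2; subst h3
  rfl

def cornerEquiv (c q d p : ℕ) : srcType c q d p ≃ tgtType c q d p where
  toFun x :=
    ⟨⟨(∑ j, x.1 (Fin.castAdd q j), ∑ j : Fin q, (x.1 (Fin.natAdd c j) - q)), by
        have htr := (trace_iff c q x.1 x.2.1).1 x.2.2.2.2
        have hq : ∀ j : Fin q, q ≤ x.1 (Fin.natAdd c j) := fun j =>
          htr.2 (Fin.natAdd c j) (Nat.le_add_right c j)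
        have hs := x.2.2.2.1
        rw [unglue_sum c q x.1 hq] at hs
        rw [mem_tgtIdx]
        refine ⟨by rw [pow_two]; omega, by omega, by omega⟩⟩,
      ⟨fun j => x.1 (Fin.castAdd q j), by
        have htr := (trace_iff c q x.1 x.2.1).1 x.2.2.2.2
        refine ⟨?_, ?_, rfl⟩
        · intro i j hij
          exact x.2.1 hij
        · intro j
          exact htr.1 (Fin.castAdd q j) j.isLt⟩,
      ⟨fun j => x.1 (Fin.natAdd c j) - q, by
        refine ⟨?_, ?_, rfl⟩
        · intro i j hij
          have h : x.1 (Fin.natAdd c i) ≤ x.1 (Fin.natAdd c j) :=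
            x.2.1 (Nat.add_le_add_left (show (i : ℕ) ≤ (j : ℕ) from hij) c)
          exact Nat.sub_le_sub_right h q
        · intro j
          have h := x.2.2.1 (Fin.natAdd c j)
          show x.1 (Fin.natAdd c j) - q ≤ d
          omega⟩⟩
  invFun y :=
    ⟨glue c q y.2.1.1 y.2.2.1, by
      have hfm := y.2.1.2.1
      have hfb := y.2.1.2.2.1
      have hfs := y.2.1.2.2.2
      have hgm := y.2.2.2.1
      have hgb := y.2.2.2.2.1
      have hgs := y.2.2.2.2.2
      have hab := mem_tgtIdx.1 y.1.2
      refine ⟨glue_mono c q _ _ hfm hgm hfb, ?_, ?_, ?_⟩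
      · intro i
        unfold glue
        split
        · exact le_trans (hfb _) (Nat.le_add_right q d)
        · have h := hgb ⟨(i : ℕ) - c, by have := i.isLt; omega⟩
          omega
      · rw [glue_sum, hfs, hgs]
        have h := hab.1
        rw [pow_two] at h
        omega
      · rw [trace_iff c q _ (glue_mono c q _ _ hfm hgm hfb)]
        constructor
        · intro i hi
          unfold glue
          rw [dif_pos hi]
          exact hfb _
        · intro i hi
          unfold glue
          rw [dif_neg (by omega)]
          exact Nat.le_add_left q _⟩
  left_inv x := by
    apply Subtype.ext
    funext i
    have htr := (trace_iff c q x.1 x.2.1).1 x.2.2.2.2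
    show glue c q (fun j => x.1 (Fin.castAdd q j)) (fun j => x.1 (Fin.natAdd c j) - q) i = x.1 i
    unfold glue
    by_cases hi : (i : ℕ) < c
    · rw [dif_pos hi]
      show x.1 (Fin.castAdd q ⟨(i : ℕ), hi⟩) = x.1 i
      rfl
    · rw [dif_neg hi]
      show x.1 (Fin.natAdd c ⟨(i : ℕ) - c, _⟩) - q + q = x.1 i
      have hnat : Fin.natAdd c (⟨(i : ℕ) - c, by have := i.isLt; omega⟩ : Fin q) = i := by
        apply Fin.ext
        show c + ((i : ℕ) - c) = (i : ℕ)
        omega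
      rw [hnat]
      have h := htr.2 i (by omega)
      omega
  right_inv y := by
    obtain ⟨⟨⟨a, b⟩, hab⟩, ⟨f, hfm, hfb, hfs⟩, ⟨g, hgm, hgb, hgs⟩⟩ := y
    simp only at hfs hgs
    have h2 : ∀ j : Fin q, glue c q f g (Fin.natAdd c j) - q = g j := by
      intro j
      rw [glue_natAdd]
      omega
    apply tgt_ext
    · show (∑ j, glue c q f g (Fin.castAdd q j), ∑ j : Fin q, (glue c q f g (Fin.natAdd c j) - q))
        = (a, b)
      rw [Finset.sum_congr rfl (fun j _ => glue_castAdd c q f g j),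
        Finset.sum_congr rfl (fun j _ => h2 j), hfs, hgs]
    · show (fun j => glue c q f g (Fin.castAdd q j)) = f
      exact funext (glue_castAdd c q f g)
    · show (fun j : Fin q => glue c q f g (Fin.natAdd c j) - q) = g
      exact funext h2

end Aux

lemma Nat.card_sigma' {ι : Type*} [Fintype ι] (G : ι → Type*) [∀ i, Finite (G i)] :
    Nat.card (Σ i, G i) = ∑ i, Nat.card (G i) := by
  letI : ∀ i, Fintype (G i) := fun i => Fintype.ofFinite _
  simp [Nat.card_eq_fintype_card, Fintype.card_sigma]

lemma aux_decomp (c q d p : ℕ) :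
    partCountTrace p (c + q) (q + d) q =
      ∑ ab ∈ tgtIdx q p, partCountSize ab.1 c q * partCountSize ab.2 q d := by
  have h1 : partCountTrace p (c + q) (q + d) q = Nat.card (tgtType c q d p) :=
    Nat.card_congr (cornerEquiv c q d p)
  rw [h1, tgtType, Nat.card_sigma']
  rw [← Finset.sum_coe_sort (tgtIdx q p)
    (fun ab => partCountSize ab.1 c q * partCountSize ab.2 q d)]
  apply Finset.sum_congr rfl
  intro ab _
  rw [Nat.card_prod]
  rfl

/-- Durfee-square (corner) decomposition of trace-`q` partitions in a `k × m` box. -/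
theorem partCountTrace_corner_decomposition (k m q p : ℕ) (hqk : q ≤ k) (hqm : q ≤ m) :
    partCountTrace p k m q =
      ∑ ab ∈ (Finset.range (p + 1) ×ˢ Finset.range (p + 1)).filter
          (fun ab => q ^ 2 + ab.1 + ab.2 = p),
        partCountSize ab.1 (k - q) q * partCountSize ab.2 q (m - q) := by
  obtain ⟨c, rfl⟩ : ∃ c, k = c + q := ⟨k - q, by omega⟩
  obtain ⟨d, rfl⟩ : ∃ d, m = q + d := ⟨m - q, by omega⟩
  have hc : c + q - q = c := by omega
  have hd : q + d - q = d := by omega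
  rw [hc, hd]
  exact aux_decomp c q d p
end

section
/- Let n, k ∈ ℕ with 1 ≤ k ≤ n and let λ be a partition with k parts fitting in a k×(n−k) box, with jump set J(λ) ⊆ {1,…,n}. Then ∑_{b ∈ J(λ)} card {a ∈ {1,…,n} | a < b, a ∉ J(λ), and exactly one of a = k, b = k holds} = trace(λ). (This is the combinatorial content of the lemma that, for the Schubert cell structure on Gr_k(ℝ^{n,1}) coming from the decomposition with the single sign representation in position k, the weight of the Schubert cell Ω_λ equals the trace of λ.) -/
open Finset

/-- The weight of the Schubert cell `Ω_λ` in the construction of `Gr_k(ℝ^{n,1})`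
having the single sign representation in position `k` equals the trace of `λ`. -/
theorem schubert_weight_eq_trace (n k : ℕ) (hk1 : 1 ≤ k) (hkn : k ≤ n)
    (l : Fin k → ℕ) (hmono : Monotone l) (hfit : ∀ i, l i ≤ n - k) :
    (∑ b ∈ Finset.image (fun i : Fin k => l i + (i : ℕ) + 1) Finset.univ,
        ((Finset.Icc 1 n).filter (fun a =>
          a < b ∧ a ∉ Finset.image (fun i : Fin k => l i + (i : ℕ) + 1) Finset.univ ∧
          Xor (a = k) (b = k))).card)
      = (Finset.univ.filter (fun i : Fin k => k ≤ l i + (i : ℕ))).card := by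
  set f : Fin k → ℕ := fun i => l i + (i : ℕ) + 1 with hf
  set J := Finset.image f Finset.univ with hJdef
  have hfsm : StrictMono f := by
    intro i j hij
    have h1 := hmono hij.le
    have h2 : (i : ℕ) < j := hij
    simp only [hf]
    omega
  have hfinj := hfsm.injective
  have hJcard : J.card = k := by
    rw [hJdef, Finset.card_image_of_injective _ hfinj, Finset.card_univ, Fintype.card_fin]
  have hJmem : ∀ b ∈ J, 1 ≤ b ∧ b ≤ n := by
    intro b hb
    rw [hJdef, Finset.mem_image] at hb
    obtain ⟨i, -, rfl⟩ := hb
    have := hfit i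
    have := i.isLt
    simp only [hf]
    omega
  have htrace : (Finset.univ.filter (fun i : Fin k => k ≤ l i + (i : ℕ))).card
      = (J.filter (fun b => k < b)).card := by
    rw [hJdef, Finset.filter_image, Finset.card_image_of_injective _ hfinj]
    congr 1
    ext i
    simp only [Finset.mem_filter, Finset.mem_univ, true_and, hf]
    omega
  rw [htrace]
  by_cases hkJ : k ∈ J
  · rw [Finset.sum_eq_single_of_mem k hkJ (by
      intro b hb hbk
      rw [Finset.card_eq_zero, Finset.filter_eq_empty_iff]
      intro a ha
      rintro ⟨-, haJ, hx⟩
      rcases hx with ⟨rfl, -⟩ | ⟨hbk', -⟩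
      · exact haJ hkJ
      · exact hbk hbk')]
    have hset : (Finset.Icc 1 n).filter (fun a => a < k ∧ a ∉ J ∧ Xor (a = k) (k = k))
        = (Finset.Icc 1 (k-1)).filter (fun a => a ∉ J) := by
      ext a
      simp only [Finset.mem_filter, Finset.mem_Icc, Xor]
      constructor
      · rintro ⟨⟨h1, h2⟩, h3, h4, -⟩
        exact ⟨⟨h1, by omega⟩, h4⟩
      · rintro ⟨⟨h1, h2⟩, h4⟩
        exact ⟨⟨h1, by omega⟩, by omega, h4, Or.inr ⟨by simp, by omega⟩⟩
    rw [hset]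
    have hadd : ((Finset.Icc 1 (k-1)).filter (fun a => a ∈ J)).card
        + ((Finset.Icc 1 (k-1)).filter (fun a => ¬ a ∈ J)).card
        = (Finset.Icc 1 (k-1)).card :=
      Finset.card_filter_add_card_filter_not _
    have hIccc : (Finset.Icc 1 (k-1)).card = k - 1 := by
      rw [Nat.card_Icc]; omega
    have heq2 : (Finset.Icc 1 (k-1)).filter (fun a => a ∈ J) = J.filter (fun b => b < k) := by
      ext b
      simp only [Finset.mem_filter, Finset.mem_Icc]
      constructor
      · rintro ⟨⟨h1, h2⟩, h3⟩
        exact ⟨h3, by omega⟩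
      · rintro ⟨h3, h2⟩
        have := hJmem b h3
        exact ⟨⟨this.1, by omega⟩, h3⟩
    have hsplit : J.card = (J.filter (fun b => b < k)).card
        + (J.filter (fun b => ¬ b < k)).card :=
      (Finset.card_filter_add_card_filter_not _).symm
    have h2 : J.filter (fun b => ¬ b < k) = insert k (J.filter (fun b => k < b)) := by
      ext b
      simp only [Finset.mem_filter, Finset.mem_insert, not_lt]
      constructor
      · rintro ⟨hb, hkb⟩
        rcases eq_or_lt_of_le hkb with h | h
        · exact Or.inl h.symm
        · exact Or.inr ⟨hb, h⟩
      · rintro (rfl | ⟨hb, h⟩)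
        · exact ⟨hkJ, le_rfl⟩
        · exact ⟨hb, h.le⟩
    have hknotin : k ∉ J.filter (fun b => k < b) := by simp
    rw [h2, Finset.card_insert_of_notMem hknotin] at hsplit
    rw [heq2] at hadd
    omega
  · have hterm : ∀ b ∈ J, ((Finset.Icc 1 n).filter (fun a =>
        a < b ∧ a ∉ J ∧ Xor (a = k) (b = k))).card = if k < b then 1 else 0 := by
      intro b hb
      have hbk : b ≠ k := fun h => hkJ (h ▸ hb)
      have hfe : (Finset.Icc 1 n).filter (fun a => a < b ∧ a ∉ J ∧ Xor (a = k) (b = k))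
          = if k < b then {k} else ∅ := by
        split_ifs with h
        · ext a
          rw [Finset.mem_filter]
          simp only [Finset.mem_filter, Finset.mem_Icc, Finset.mem_singleton, Xor]
          constructor
          · rintro ⟨-, -, -, hx⟩
            rcases hx with ⟨rfl, -⟩ | ⟨hb', -⟩
            · rfl
            · exact absurd hb' hbk
          · rintro rfl
            exact ⟨⟨hk1, hkn⟩, h, hkJ, Or.inl ⟨rfl, hbk⟩⟩
        · ext a
          simp only [Finset.mem_filter, Finset.mem_Icc, Finset.notMem_empty, iff_false, not_and]
          rintro ⟨h1, h2⟩ hab haJ hx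
          rcases hx with ⟨rfl, -⟩ | ⟨hb', -⟩
          · exact h hab
          · exact hbk hb'
      rw [hfe]
      split_ifs <;> simp
    rw [Finset.sum_congr rfl hterm, Finset.card_filter]
end

section
/- Let k ∈ ℕ and let α, β : Fin k → ℕ be monotone (weakly increasing) with α i ≤ β i for all i. Then trace(α) ≤ trace(β), and (∑ i, α i) + trace(β) ≤ (∑ i, β i) + trace(α). (Equivalently, adding boxes to a Young diagram can only increase the trace, and each added box increases the trace by at most one; this is the combinatorial content of the lemma that all differentials vanish in the cellular spectral sequence for Gr_k(ℝ^{n,1}) with the standard decomposition.) -/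
open Finset

/-- Adding boxes to a Young diagram can only increase the trace, and each added box
increases the trace by at most one. -/
theorem trace_monotone_and_shift (k : ℕ) (α β : Fin k → ℕ)
    (hα : Monotone α) (hβ : Monotone β) (h : ∀ i, α i ≤ β i) :
    (Finset.univ.filter (fun i : Fin k => k ≤ α i + (i : ℕ))).card
        ≤ (Finset.univ.filter (fun i : Fin k => k ≤ β i + (i : ℕ))).card ∧
    (∑ i, α i) + (Finset.univ.filter (fun i : Fin k => k ≤ β i + (i : ℕ))).card
        ≤ (∑ i, β i) + (Finset.univ.filter (fun i : Fin k => k ≤ α i + (i : ℕ))).card := by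
  classical
  set Sa := Finset.univ.filter (fun i : Fin k => k ≤ α i + (i : ℕ)) with hSa
  set Sb := Finset.univ.filter (fun i : Fin k => k ≤ β i + (i : ℕ)) with hSb
  have hsub : Sa ⊆ Sb := by
    intro i hi
    simp only [hSa, hSb, mem_filter, mem_univ, true_and] at *
    exact le_trans hi (Nat.add_le_add_right (h i) _)
  refine ⟨card_le_card hsub, ?_⟩
  have hcard : (Sb \ Sa).card + Sa.card = Sb.card := card_sdiff_add_card_eq_card hsub
  have hkey : (Sb \ Sa).card ≤ ∑ i, (β i - α i) := by
    calc (Sb \ Sa).card = ∑ _i ∈ Sb \ Sa, 1 := by simp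
    _ ≤ ∑ i ∈ Sb \ Sa, (β i - α i) := by
        apply sum_le_sum
        intro i hi
        simp only [hSa, hSb, mem_sdiff, mem_filter, mem_univ, true_and, not_le] at hi
        omega
    _ ≤ ∑ i, (β i - α i) := sum_le_sum_of_subset (subset_univ _)
  have hsum : ∑ i, (β i - α i) + ∑ i, α i = ∑ i, β i := by
    rw [← sum_add_distrib]
    exact Finset.sum_congr rfl fun i _ => Nat.sub_add_cancel (h i)
  omega
end

section
/- Let n, k ∈ ℕ with k ≤ n and let λ be a partition with k parts whose jump set J(λ) is contained in {1,…,n}. Let H = {1,…,n} \ J(λ), a set of n−k elements, and let h : Fin (n−k) → ℕ enumerate H in increasing order (so h(i) is the (i+1)-st smallest element of H, 0-indexed). Then for every i : Fin (n−k), card {j : Fin k | λ j + j + 1 > h i} = card {j : Fin k | λ j > i}. -/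
open Finset

/-- The key counting identity (Lemma `bijectionlemma` of the paper): if `H` enumerates
the complement of the jump set of `λ` in `{1,…,n}` in increasing order via `h`, then
for every `i`, `#{j : λ_j + j + 1 > h i} = #{j : λ_j > i}`. -/
theorem jump_complement_counting (n k : ℕ) (hk : k ≤ n) (l : Fin k → ℕ)
    (hmono : Monotone l) (hfit : ∀ i : Fin k, l i + (i : ℕ) + 1 ≤ n)
    (H : Finset ℕ)
    (hH : H = Finset.Icc 1 n \ Finset.image (fun i : Fin k => l i + (i : ℕ) + 1) Finset.univ)
    (hcard : H.card = n - k) :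
    ∀ i : Fin (n - k),
      (Finset.univ.filter
          (fun j : Fin k => ((H.orderIsoOfFin hcard i : ℕ)) < l j + (j : ℕ) + 1)).card
        = (Finset.univ.filter (fun j : Fin k => (i : ℕ) < l j)).card := by
  set t : ℕ → ℕ := fun m => (univ.filter (fun j : Fin k => l j ≤ m)).card with ht
  -- key lower-set fact: `l j ≤ m ↔ j < t m`
  have key : ∀ (m : ℕ) (j : Fin k), l j ≤ m ↔ (j : ℕ) < t m := by
    intro m j
    constructor
    · intro hj
      have hsub : Finset.Iic j ⊆ univ.filter (fun a : Fin k => l a ≤ m) := by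
        intro a ha
        simp only [mem_Iic] at ha
        simp only [mem_filter, mem_univ, true_and]
        exact le_trans (hmono ha) hj
      have := card_le_card hsub
      rw [Fin.card_Iic] at this
      exact this
    · intro hj
      by_contra hc
      push_neg at hc
      have hsub : univ.filter (fun a : Fin k => l a ≤ m) ⊆ Finset.Iio j := by
        intro a ha
        simp only [mem_filter, mem_univ, true_and] at ha
        simp only [mem_Iio]
        by_contra hge
        push_neg at hge
        exact absurd ha (not_le.mpr (lt_of_lt_of_le hc (hmono hge)))
      have := card_le_card hsub
      rw [Fin.card_Iio] at this
      exact Nat.lt_irrefl _ (lt_of_lt_of_le hj this)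
  have htk : ∀ m, t m ≤ k := by
    intro m
    have := card_le_card (filter_subset (fun j : Fin k => l j ≤ m) univ)
    simpa using this
  have htmono : Monotone t := by
    intro a b hab
    apply card_le_card
    intro j hj
    simp only [mem_filter, mem_univ, true_and] at hj ⊢
    omega
  -- the enumerating function of H
  set g : Fin (n - k) → ℕ := fun i => (i : ℕ) + t i + 1 with hg
  have hgmono : StrictMono g := by
    intro a b hab
    have : t (a : ℕ) ≤ t (b : ℕ) := htmono (le_of_lt hab)
    simp only [hg]
    have : (a : ℕ) < (b : ℕ) := hab
    omega
  have hgmem : ∀ i : Fin (n - k), g i ∈ H := by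
    intro i
    rw [hH, mem_sdiff]
    constructor
    · rw [mem_Icc]
      have h1 : (i : ℕ) < n - k := i.2
      have h2 := htk (i : ℕ)
      constructor <;> simp only [hg] <;> omega
    · simp only [mem_image, mem_univ, true_and, not_exists]
      intro j hj
      rcases lt_or_ge (j : ℕ) (t (i : ℕ)) with hlt | hge
      · have : l j ≤ (i : ℕ) := (key (i : ℕ) j).mpr hlt
        simp only [hg] at hj; omega
      · have : ¬ l j ≤ (i : ℕ) := fun h => by have := (key (i : ℕ) j).mp h; omega
        simp only [hg] at hj; omega
  have hemb := Finset.orderEmbOfFin_unique hcard hgmem hgmono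
  intro i
  have hval : ((H.orderIsoOfFin hcard i : ℕ)) = g i := by
    rw [Finset.coe_orderIsoOfFin_apply, hemb]
  rw [hval]
  congr 1
  apply filter_congr
  intro j _
  simp only [hg, eq_iff_iff]
  constructor
  · intro hlt
    by_contra hle
    push_neg at hle
    have := (key (i : ℕ) j).mp hle
    omega
  · intro hlt
    have : ¬ l j ≤ (i : ℕ) := by omega
    have := fun h => (key (i : ℕ) j).mp h
    have hge : t (i : ℕ) ≤ (j : ℕ) := by
      by_contra hc
      push_neg at hc
      exact absurd ((key (i : ℕ) j).mpr hc) ‹¬ l j ≤ (i : ℕ)›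
    omega
end

section
/- Let n, k ∈ ℕ with k ≤ n and let λ be a partition with k parts whose jump set J(λ) is contained in {1,…,n}, and let H = {1,…,n} \ J(λ). Then for every j : Fin k, the number of elements of H that are strictly less than λ j + j + 1 equals λ j. -/
open Finset

/-- The number of elements of the complement `H` of the jump set that are strictly
below the `j`-th jump `λ_j + j + 1` equals `λ_j`. -/
theorem jump_complement_below_count (n k : ℕ) (hk : k ≤ n) (l : Fin k → ℕ)
    (hmono : Monotone l) (hfit : ∀ i : Fin k, l i + (i : ℕ) + 1 ≤ n) :
    ∀ j : Fin k,
      ((Finset.Icc 1 n \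
          Finset.image (fun i : Fin k => l i + (i : ℕ) + 1) Finset.univ).filter
        (fun a => a < l j + (j : ℕ) + 1)).card = l j := by
  intro j
  set f : Fin k → ℕ := fun i => l i + (i : ℕ) + 1 with hf
  have hsm : StrictMono f := by
    intro a b hab
    have h1 : l a ≤ l b := hmono hab.le
    have h2 : (a : ℕ) < (b : ℕ) := hab
    simp only [hf]
    omega
  have hinj : Function.Injective f := hsm.injective
  have hsd : (Finset.Icc 1 n \ Finset.image f Finset.univ).filter
      (fun a => a < l j + (j : ℕ) + 1)
      = (Finset.Icc 1 n).filter (fun a => a < l j + (j : ℕ) + 1)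
        \ (Finset.image f Finset.univ).filter (fun a => a < l j + (j : ℕ) + 1) := by
    ext a
    simp only [Finset.mem_filter, Finset.mem_sdiff]
    tauto
  rw [hsd, Finset.card_sdiff_of_subset]
  · have h1 : (Finset.Icc 1 n).filter (fun a => a < l j + (j : ℕ) + 1)
        = Finset.Icc 1 (l j + (j : ℕ)) := by
      ext a
      simp only [Finset.mem_filter, Finset.mem_Icc]
      have := hfit j
      omega
    have h2 : (Finset.image f Finset.univ).filter (fun a => a < l j + (j : ℕ) + 1)
        = Finset.image f (Finset.univ.filter (fun i => i < j)) := by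
      rw [Finset.filter_image]
      congr 1
      ext i
      simp only [Finset.mem_filter, Finset.mem_univ, true_and]
      constructor
      · intro h
        by_contra hle
        have : f j ≤ f i := hsm.le_iff_le.mpr (not_lt.mp hle)
        exact absurd h (not_lt.mpr this)
      · intro h
        exact hsm h
    rw [h1, h2, Finset.card_image_of_injective _ hinj]
    have h3 : (Finset.univ.filter (fun i : Fin k => i < j)).card = (j : ℕ) := by
      have : Finset.univ.filter (fun i : Fin k => i < j) = Finset.Iio j := by
        ext i; simp
      rw [this, Fin.card_Iio]
    rw [h3, Nat.card_Icc]
    omega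
  · intro a ha
    rw [Finset.mem_filter] at ha ⊢
    refine ⟨?_, ha.2⟩
    obtain ⟨i, -, rfl⟩ := Finset.mem_image.mp ha.1
    have := hfit i
    rw [Finset.mem_Icc]
    constructor <;> simp only [hf] <;> omega
end

section
/- The perpendicular complement map sends Schubert cells to reverse-flag Schubert cells of the transpose partition: let n, k ∈ ℕ with k ≤ n, let λ be a partition with k parts fitting in a k×(n−k) box, with transpose λᵀ, and let V be a linear subspace of EuclideanSpace ℝ (Fin n) with finrank V = k. Then [for all m ≤ n, finrank (V ⊓ F_m) = card {i : Fin k | λ i + i + 1 ≤ m}] if and only if [for all m ≤ n, finrank (Vᗮ ⊓ Ĝ_m) = card {i : Fin (n−k) | λᵀ i + i + 1 ≤ m}]. -/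
open Finset Module

/-- `Fflag n m` is the span of the first `m` standard basis vectors
`e_0, …, e_{m-1}` of `ℝⁿ`. -/
noncomputable def Fflag (n m : ℕ) : Submodule ℝ (EuclideanSpace ℝ (Fin n)) :=
  Submodule.span ℝ ((fun i : Fin n => EuclideanSpace.single i (1 : ℝ)) '' {i | (i : ℕ) < m})

/-- `Gflag n m` is the span of the last `m` standard basis vectors
`e_{n-m}, …, e_{n-1}` of `ℝⁿ`. -/
noncomputable def Gflag (n m : ℕ) : Submodule ℝ (EuclideanSpace ℝ (Fin n)) :=
  Submodule.span ℝ ((fun i : Fin n => EuclideanSpace.single i (1 : ℝ)) '' {i | n - m ≤ (i : ℕ)})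


theorem comb_ident (n k m : ℕ) (hk : k ≤ n) (hm : m ≤ n) (l : Fin k → ℕ)
    (hmono : Monotone l) (hfit : ∀ i, l i ≤ n - k)
    (lT : Fin (n - k) → ℕ)
    (hlT : ∀ i, lT i
      = (Finset.univ.filter (fun j : Fin k => n - k < l j + (i : ℕ) + 1)).card) :
    (Finset.univ.filter (fun i : Fin (n - k) => lT i + (i : ℕ) + 1 ≤ m)).card + (n - m)
      = (n - k) + (Finset.univ.filter (fun j : Fin k => l j + (j : ℕ) + 1 ≤ n - m)).card := by
  have hlTle : ∀ i, lT i ≤ k := by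
    intro i
    rw [hlT]
    exact (Finset.card_filter_le _ _).trans (by simp)
  -- upper set characterization
  have hupper : ∀ (i : Fin (n - k)) (j : Fin k),
      (n - k < l j + (i : ℕ) + 1) ↔ k - lT i ≤ (j : ℕ) := by
    intro i j
    constructor
    · intro h
      have hsub : Finset.Ici j ⊆ Finset.univ.filter (fun j' : Fin k => n - k < l j' + (i : ℕ) + 1) := by
        intro j' hj'
        simp only [Finset.mem_filter, Finset.mem_univ, true_and]
        have := hmono (Finset.mem_Ici.mp hj')
        omega
      have hcard := Finset.card_le_card hsub
      rw [Fin.card_Ici, ← hlT] at hcard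
      omega
    · intro h
      by_contra hc
      push_neg at hc
      have hsub : Finset.univ.filter (fun j' : Fin k => n - k < l j' + (i : ℕ) + 1)
          ⊆ Finset.Ioi j := by
        intro j' hj'
        simp only [Finset.mem_filter, Finset.mem_univ, true_and] at hj'
        rw [Finset.mem_Ioi]
        by_contra hle
        push_neg at hle
        have := hmono hle
        omega
      have hcard := Finset.card_le_card hsub
      rw [Fin.card_Ioi, ← hlT] at hcard
      have := hlTle i
      have := j.isLt
      omega
  have hbS : ∀ j : Fin k, l j + (j : ℕ) ≤ n - 1 := by
    intro j
    have := hfit j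
    have := j.isLt
    omega
  have hbT : ∀ i : Fin (n - k), lT i + (i : ℕ) ≤ n - 1 := by
    intro i
    have := hlTle i
    have := i.isLt
    omega
  have hdisj : ∀ (i : Fin (n - k)) (j : Fin k),
      l j + (j : ℕ) ≠ n - 1 - (lT i + (i : ℕ)) := by
    intro i j h
    have hb := hbT i
    have hj := j.isLt
    have hi := i.isLt
    by_cases hp : n - k < l j + (i : ℕ) + 1
    · have h2 := (hupper i j).mp hp
      have := hlTle i
      omega
    · have h2 : ¬ (k - lT i ≤ (j : ℕ)) := fun hh => hp ((hupper i j).mpr hh)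
      push_neg at hp h2
      have := hlTle i
      omega
  -- the two finsets in range n
  set S : Finset ℕ := Finset.univ.image (fun j : Fin k => l j + (j : ℕ)) with hS
  set T : Finset ℕ := Finset.univ.image (fun i : Fin (n - k) => n - 1 - (lT i + (i : ℕ))) with hT
  have hfinj : Function.Injective (fun j : Fin k => l j + (j : ℕ)) := by
    intro a b hab
    simp only at hab
    rcases lt_trichotomy a b with h | h | h
    · have := hmono h.le
      have : (a : ℕ) < b := h
      omega
    · exact h
    · have := hmono h.le
      have : (b : ℕ) < a := h
      omega
  have hginj : Function.Injective (fun i : Fin (n - k) => n - 1 - (lT i + (i : ℕ))) := by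
    intro a b hab
    simp only at hab
    have hba := hbT a
    have hbb := hbT b
    rcases lt_trichotomy a b with h | h | h
    · have := hlTle a
      have hmo : lT a ≤ lT b := by
        rw [hlT, hlT]
        apply Finset.card_le_card
        intro j hj
        simp only [Finset.mem_filter, Finset.mem_univ, true_and] at hj ⊢
        have : (a : ℕ) ≤ b := h.le
        omega
      have : (a : ℕ) < b := h
      omega
    · exact h
    · have hmo : lT b ≤ lT a := by
        rw [hlT, hlT]
        apply Finset.card_le_card
        intro j hj
        simp only [Finset.mem_filter, Finset.mem_univ, true_and] at hj ⊢
        have : (b : ℕ) ≤ a := h.le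
        omega
      have : (b : ℕ) < a := h
      omega
  have hScard : S.card = k := by
    rw [hS, Finset.card_image_of_injective _ hfinj, Finset.card_univ, Fintype.card_fin]
  have hTcard : T.card = n - k := by
    rw [hT, Finset.card_image_of_injective _ hginj, Finset.card_univ, Fintype.card_fin]
  have hSTdisj : Disjoint S T := by
    rw [Finset.disjoint_left]
    intro x hxS hxT
    rw [hS, Finset.mem_image] at hxS
    rw [hT, Finset.mem_image] at hxT
    obtain ⟨j, -, rfl⟩ := hxS
    obtain ⟨i, -, hi⟩ := hxT
    exact hdisj i j hi.symm
  have huniv : S ∪ T = Finset.range n := by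
    apply Finset.eq_of_subset_of_card_le
    · intro x hx
      rw [Finset.mem_union] at hx
      rw [Finset.mem_range]
      rcases hx with hx | hx
      · rw [hS, Finset.mem_image] at hx
        obtain ⟨j, -, rfl⟩ := hx
        have := hbS j
        have := j.isLt
        omega
      · rw [hT, Finset.mem_image] at hx
        obtain ⟨i, -, rfl⟩ := hx
        have := i.isLt
        omega
    · rw [Finset.card_range, Finset.card_union_of_disjoint hSTdisj, hScard, hTcard]
      omega
  -- counting
  have hA : (Finset.univ.filter (fun i : Fin (n - k) => lT i + (i : ℕ) + 1 ≤ m)).card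
      = (T.filter (fun x => n - m ≤ x)).card := by
    rw [hT, Finset.filter_image,
      Finset.card_image_of_injective _ hginj]
    congr 1
    apply Finset.filter_congr
    intro i _
    have := hbT i
    have := i.isLt
    omega
  have hB : (Finset.univ.filter (fun j : Fin k => l j + (j : ℕ) + 1 ≤ n - m)).card
      = (S.filter (fun x => x + 1 ≤ n - m)).card := by
    rw [hS, Finset.filter_image, Finset.card_image_of_injective _ hfinj]
  have hsplit : (S.filter (fun x => x + 1 ≤ n - m)).card
      + (T.filter (fun x => x + 1 ≤ n - m)).card = n - m := by
    rw [← Finset.card_union_of_disjoint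
      (Finset.disjoint_filter_filter hSTdisj), ← Finset.filter_union, huniv]
    have : (Finset.range n).filter (fun x => x + 1 ≤ n - m) = Finset.range (n - m) := by
      ext x
      simp only [Finset.mem_filter, Finset.mem_range]
      omega
    rw [this, Finset.card_range]
  have hTsplit : (T.filter (fun x => n - m ≤ x)).card
      + (T.filter (fun x => x + 1 ≤ n - m)).card = n - k := by
    rw [← hTcard]
    have : (T.filter (fun x => x + 1 ≤ n - m)) = T.filter (fun x => ¬ (n - m ≤ x)) := by
      apply Finset.filter_congr
      intro x _
      omega
    rw [this]
    exact Finset.card_filter_add_card_filter_not _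
  rw [hA, hB]
  omega

lemma card_filter_fin_lt (n m : ℕ) (hm : m ≤ n) :
    (Finset.univ.filter (fun i : Fin n => (i : ℕ) < m)).card = m := by
  have himg : (Finset.univ.filter (fun i : Fin n => (i : ℕ) < m)).image Fin.val
      = (Finset.range n).filter (fun x => x < m) := by
    ext x
    simp only [Finset.mem_image, Finset.mem_filter, Finset.mem_univ, true_and,
      Finset.mem_range]
    constructor
    · rintro ⟨i, hi, rfl⟩
      exact ⟨i.isLt, hi⟩
    · rintro ⟨hx, hxm⟩
      exact ⟨⟨x, hx⟩, hxm, rfl⟩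
  have := Finset.card_image_of_injective
    (Finset.univ.filter (fun i : Fin n => (i : ℕ) < m)) Fin.val_injective
  rw [himg] at this
  rw [← this]
  have : (Finset.range n).filter (fun x => x < m) = Finset.range m := by
    ext x
    simp only [Finset.mem_filter, Finset.mem_range]
    omega
  rw [this, Finset.card_range]

lemma card_filter_fin_ge (n m : ℕ) (hm : m ≤ n) :
    (Finset.univ.filter (fun i : Fin n => n - m ≤ (i : ℕ))).card = m := by
  have hcompl := Finset.card_filter_add_card_filter_not
    (s := (Finset.univ : Finset (Fin n))) (p := fun i : Fin n => (i : ℕ) < n - m)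
  rw [card_filter_fin_lt n (n - m) (by omega)] at hcompl
  have heq : Finset.univ.filter (fun i : Fin n => ¬ (i : ℕ) < n - m)
      = Finset.univ.filter (fun i : Fin n => n - m ≤ (i : ℕ)) := by
    apply Finset.filter_congr
    intro i _
    omega
  rw [heq] at hcompl
  simp only [Finset.card_univ, Fintype.card_fin] at hcompl
  omega

lemma finrank_span_single (n : ℕ) (p : Fin n → Prop) [DecidablePred p] :
    finrank ℝ (Submodule.span ℝ
        ((fun i : Fin n => EuclideanSpace.single i (1 : ℝ)) '' {i | p i}))
      = (Finset.univ.filter p).card := by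
  classical
  set b := EuclideanSpace.basisFun (Fin n) ℝ with hb
  have hli : LinearIndependent ℝ
      (fun x : {i : Fin n // p i} => EuclideanSpace.single (x : Fin n) (1 : ℝ)) := by
    have := b.toBasis.linearIndependent.comp
      (Subtype.val : {i : Fin n // p i} → Fin n) Subtype.val_injective
    simpa [hb, Function.comp_def, OrthonormalBasis.coe_toBasis, EuclideanSpace.basisFun_apply] using this
  have hrange : Set.range
      (fun x : {i : Fin n // p i} => EuclideanSpace.single (x : Fin n) (1 : ℝ))
      = (fun i : Fin n => EuclideanSpace.single i (1 : ℝ)) '' {i | p i} := by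
    rw [Set.image_eq_range]
    rfl
  rw [← hrange, finrank_span_eq_card hli, Fintype.card_subtype]

lemma finrank_Fflag (n m : ℕ) (hm : m ≤ n) : finrank ℝ (Fflag n m) = m := by
  rw [Fflag, finrank_span_single n (fun i : Fin n => (i : ℕ) < m),
    card_filter_fin_lt n m hm]

lemma finrank_Gflag (n m : ℕ) (hm : m ≤ n) : finrank ℝ (Gflag n m) = m := by
  rw [Gflag, finrank_span_single n (fun i : Fin n => n - m ≤ (i : ℕ)),
    card_filter_fin_ge n m hm]

lemma Gflag_eq_orthogonal (n m : ℕ) (hm : m ≤ n) :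
    Gflag n m = (Fflag n (n - m))ᗮ := by
  apply Submodule.eq_of_le_of_finrank_eq
  · rw [Gflag, Fflag, ← Submodule.isOrtho_iff_le]
    rw [Submodule.isOrtho_span]
    rintro _ ⟨i, hi, rfl⟩ _ ⟨j, hj, rfl⟩
    simp only [Set.mem_setOf_eq] at hi hj
    have hij : i ≠ j := by
      intro h
      subst h
      omega
    rw [EuclideanSpace.inner_single_left]
    simp [EuclideanSpace.single_apply, hij]
  · rw [finrank_Gflag n m hm]
    have := (Fflag n (n - m)).finrank_add_finrank_orthogonal
    rw [finrank_Fflag n (n - m) (by omega), finrank_euclideanSpace_fin] at this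
    omega

lemma rank_ident (n k m : ℕ) (hk : k ≤ n) (hm : m ≤ n)
    (V : Submodule ℝ (EuclideanSpace ℝ (Fin n))) (hV : Module.finrank ℝ V = k) :
    Module.finrank ℝ ↥(Vᗮ ⊓ Gflag n m) + (k + (n - m))
      = n + Module.finrank ℝ ↥(V ⊓ Fflag n (n - m)) := by
  rw [Gflag_eq_orthogonal n m hm, Submodule.inf_orthogonal]
  have h1 := (V ⊔ Fflag n (n - m)).finrank_add_finrank_orthogonal
  rw [finrank_euclideanSpace_fin] at h1
  have h2 := Submodule.finrank_sup_add_finrank_inf_eq V (Fflag n (n - m))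
  rw [hV, finrank_Fflag n (n - m) (by omega)] at h2
  omega

/-- The perpendicular complement map sends the Schubert cell of `λ` (with respect to
the standard flag) to the reverse-flag Schubert cell of the transpose `λᵀ`. -/
theorem perp_schubert (n k : ℕ) (hk : k ≤ n) (l : Fin k → ℕ)
    (hmono : Monotone l) (hfit : ∀ i, l i ≤ n - k)
    (lT : Fin (n - k) → ℕ)
    (hlT : ∀ i, lT i
      = (Finset.univ.filter (fun j : Fin k => n - k < l j + (i : ℕ) + 1)).card)
    (V : Submodule ℝ (EuclideanSpace ℝ (Fin n)))
    (hV : Module.finrank ℝ V = k) :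
    (∀ m ≤ n, Module.finrank ℝ ↥(V ⊓ Fflag n m)
        = (Finset.univ.filter (fun i : Fin k => l i + (i : ℕ) + 1 ≤ m)).card)
      ↔ (∀ m ≤ n, Module.finrank ℝ ↥(Vᗮ ⊓ Gflag n m)
        = (Finset.univ.filter (fun i : Fin (n - k) => lT i + (i : ℕ) + 1 ≤ m)).card) := by
  constructor
  · intro hF m hm
    have hC := rank_ident n k m hk hm V hV
    have hB := hF (n - m) (by omega)
    have hD := comb_ident n k m hk hm l hmono hfit lT hlT
    omega
  · intro hG m hm
    have hC := rank_ident n k (n - m) hk (by omega) V hV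
    have e : n - (n - m) = m := by omega
    rw [e] at hC
    have hA := hG (n - m) (by omega)
    have hD := comb_ident n k (n - m) hk (by omega) l hmono hfit lT hlT
    rw [e] at hD
    omega
end

section
/- Let n, k ∈ ℕ with k ≤ n, let λ be a partition with k parts fitting in a k×(n−k) box, and let λᵀ be its transpose. Then for every m ≤ n: card {i : Fin (n−k) | λᵀ i + i + 1 ≤ m} + k = m + card {i : Fin k | λ i + i + 1 ≤ n − m}. (This dual counting identity underlies the fact that the perpendicular complement map carries the Schubert cell of λ onto the reverse-flag Schubert cell of λᵀ.) -/
open Finset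

/-- The dual counting identity underlying the perp map on Schubert cells. -/
theorem transpose_dual_counting (n k : ℕ) (hk : k ≤ n) (l : Fin k → ℕ)
    (hmono : Monotone l) (hfit : ∀ i, l i ≤ n - k)
    (lT : Fin (n - k) → ℕ)
    (hlT : ∀ i, lT i
      = (Finset.univ.filter (fun j : Fin k => n - k < l j + (i : ℕ) + 1)).card) :
    ∀ m ≤ n,
      (Finset.univ.filter (fun i : Fin (n - k) => lT i + (i : ℕ) + 1 ≤ m)).card + k
        = m + (Finset.univ.filter (fun i : Fin k => l i + (i : ℕ) + 1 ≤ n - m)).card := by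
  intro m hm
  classical
  -- auxiliary cardinality fact
  have haux : ∀ a : ℕ, (univ.filter fun j : Fin k => a ≤ (j : ℕ)).card = k - a := by
    intro a
    rw [← Finset.card_image_of_injective _ Fin.val_injective]
    have himg : ((univ.filter fun j : Fin k => a ≤ (j : ℕ)).image Fin.val)
        = Finset.Ico a k := by
      ext t
      simp only [mem_image, mem_filter, mem_univ, true_and, mem_Ico]
      constructor
      · rintro ⟨j, hj, rfl⟩; exact ⟨hj, j.2⟩
      · rintro ⟨h1, h2⟩; exact ⟨⟨t, h2⟩, h1, rfl⟩
    rw [himg, Nat.card_Ico]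
  set f : Fin k → ℕ := fun j => l j + (j : ℕ) with hf
  set g : Fin (n - k) → ℕ := fun i => n - 1 - (lT i + (i : ℕ)) with hg
  have hsm : StrictMono f := by
    intro a b hab
    have h1 : l a ≤ l b := hmono hab.le
    have h2 : (a : ℕ) < b := hab
    simp only [hf]
    omega
  have hlT_le : ∀ i, lT i ≤ k := by
    intro i
    rw [hlT]
    calc (univ.filter fun j : Fin k => n - k < l j + (i : ℕ) + 1).card
        ≤ (univ : Finset (Fin k)).card := card_filter_le _ _
      _ = k := by simp
  have hfi_le : ∀ i : Fin (n - k), lT i + (i : ℕ) ≤ n - 1 := by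
    intro i
    have h1 := hlT_le i
    have h2 := i.2
    omega
  have hlT_mono : Monotone lT := by
    intro a b hab
    rw [hlT, hlT]
    apply card_le_card
    intro j hj
    simp only [mem_filter, mem_univ, true_and] at hj ⊢
    have : (a : ℕ) ≤ b := hab
    omega
  have hgsm : ∀ a b : Fin (n - k), a < b → lT a + (a : ℕ) < lT b + (b : ℕ) := by
    intro a b hab
    have h1 : lT a ≤ lT b := hlT_mono hab.le
    have h2 : (a : ℕ) < b := hab
    omega
  have hg_inj : Function.Injective g := by
    intro a b hab
    have h1 := hfi_le a
    have h2 := hfi_le b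
    simp only [hg] at hab
    rcases lt_trichotomy a b with h | h | h
    · have := hgsm a b h; omega
    · exact h
    · have := hgsm b a h; omega
  -- key disjointness fact
  have hkey : ∀ (i : Fin (n - k)) (j : Fin k), f j ≠ g i := by
    intro i j
    have hik : (i : ℕ) < n - k := i.2
    have hjk : (j : ℕ) < k := j.2
    have hcle : lT i ≤ k := hlT_le i
    by_cases hcase : n - k < l j + (i : ℕ) + 1
    · -- j is in the defining filter; so are all j' ≥ j
      have hsub : (univ.filter fun j' : Fin k => (j : ℕ) ≤ (j' : ℕ))
          ⊆ (univ.filter fun j' : Fin k => n - k < l j' + (i : ℕ) + 1) := by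
        intro j' hj'
        simp only [mem_filter, mem_univ, true_and] at hj' ⊢
        have hle : l j ≤ l j' := hmono (by exact_mod_cast hj' : j ≤ j')
        omega
      have hcard : k - (j : ℕ) ≤ lT i := by
        rw [hlT]
        calc k - (j : ℕ) = (univ.filter fun j' : Fin k => (j : ℕ) ≤ (j' : ℕ)).card :=
              (haux _).symm
          _ ≤ _ := card_le_card hsub
      simp only [hf, hg]
      omega
    · -- j is not in the filter; neither is any j' ≤ j
      have hsub : (univ.filter fun j' : Fin k => n - k < l j' + (i : ℕ) + 1)
          ⊆ (univ.filter fun j' : Fin k => (j : ℕ) + 1 ≤ (j' : ℕ)) := by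
        intro j' hj'
        simp only [mem_filter, mem_univ, true_and] at hj' ⊢
        by_contra hlt
        have hle : l j' ≤ l j := hmono (by
          have : (j' : ℕ) ≤ (j : ℕ) := by omega
          exact_mod_cast this)
        omega
      have hcard : lT i ≤ k - ((j : ℕ) + 1) := by
        rw [hlT]
        calc _ ≤ (univ.filter fun j' : Fin k => (j : ℕ) + 1 ≤ (j' : ℕ)).card :=
              card_le_card hsub
          _ = k - ((j : ℕ) + 1) := haux _
      have hlj : l j + (i : ℕ) + 1 ≤ n - k := by omega
      simp only [hf, hg]
      omega
  set A : Finset ℕ := univ.image f with hA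
  set B : Finset ℕ := univ.image g with hB
  have hA_card : A.card = k := by
    rw [hA, card_image_of_injective _ hsm.injective, card_univ, Fintype.card_fin]
  have hB_card : B.card = n - k := by
    rw [hB, card_image_of_injective _ hg_inj, card_univ, Fintype.card_fin]
  have hdisj : Disjoint A B := by
    rw [Finset.disjoint_left]
    rintro t htA htB
    rw [hA, mem_image] at htA
    rw [hB, mem_image] at htB
    obtain ⟨j, -, rfl⟩ := htA
    obtain ⟨i, -, hgi⟩ := htB
    exact hkey i j hgi.symm
  have hA_sub : A ⊆ range n := by
    intro t ht
    rw [hA, mem_image] at ht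
    obtain ⟨j, -, rfl⟩ := ht
    have h1 := hfit j
    have h2 := j.2
    simp only [hf, mem_range]
    omega
  have hB_sub : B ⊆ range n := by
    intro t ht
    rw [hB, mem_image] at ht
    obtain ⟨i, -, rfl⟩ := ht
    have h2 := i.2
    simp only [hg, mem_range]
    omega
  have hunion : A ∪ B = range n := by
    apply Finset.eq_of_subset_of_card_le (Finset.union_subset hA_sub hB_sub)
    rw [Finset.card_range, Finset.card_union_of_disjoint hdisj, hA_card, hB_card]
    omega
  -- counting elements ≥ n - m
  set P : ℕ → Prop := fun t => n - m ≤ t with hP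
  have htotal : (A.filter P).card + (B.filter P).card = m := by
    rw [← Finset.card_union_of_disjoint (Finset.disjoint_filter_filter hdisj),
      ← Finset.filter_union, hunion]
    have : (range n).filter P = Finset.Ico (n - m) n := by
      ext t
      simp only [mem_filter, mem_range, mem_Ico, hP]
      omega
    rw [this, Nat.card_Ico]
    omega
  have hBcount : (B.filter P).card
      = (univ.filter fun i : Fin (n - k) => lT i + (i : ℕ) + 1 ≤ m).card := by
    rw [hB, Finset.filter_image, card_image_of_injective _ hg_inj]
    congr 1
    apply Finset.filter_congr
    intro i _
    have h1 := hfi_le i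
    simp only [hg, hP, Function.comp]
    constructor <;> intro h <;> omega
  have hAcount : (A.filter P).card
      + (univ.filter fun i : Fin k => l i + (i : ℕ) + 1 ≤ n - m).card = k := by
    rw [hA, Finset.filter_image, card_image_of_injective _ hsm.injective]
    have hneg : (univ.filter fun i : Fin k => l i + (i : ℕ) + 1 ≤ n - m)
        = univ.filter fun i : Fin k => ¬ P (f i) := by
      apply Finset.filter_congr
      intro i _
      have h1 := hfit i
      have h2 := i.2
      simp only [hf, hP]
      constructor <;> intro h <;> omega
    rw [hneg, Finset.card_filter_add_card_filter_not, card_univ, Fintype.card_fin]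
  omega
end
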